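/- arXiv:2405.20792 — 3 statements merged into one kernel-verified Lean document; each statement's English description precedes it below -/
import Mathlib

section
/- The Weyl operator W_z equals the Toeplitz operator with bounded symbol g_z(w) = e^{2i Im(w·conj(z)) + |z|²/2}, i.e. for all entire f ∈ L²(ℂ,μ) and all u ∈ ℂ, P(g_z f)(u) = k_z(u) f(u-z). -/
open MeasureTheory Complex

/-- The Gaussian measure `dμ(z) = π⁻¹ e^{-|z|²} dz` on `ℂ`. -/
noncomputable def gaussianMeasure : Measure ℂ :=
  (volume : Measure ℂ).withDensity fun z => ENNReal.ofReal (Real.exp (-‖z‖ ^ 2) / Real.pi)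

/-- The normalized reproducing kernel `k_z(u) = e^{u·conj(z) - |z|²/2}`. -/
noncomputable def normKernel (z : ℂ) : ℂ → ℂ :=
  fun u => Complex.exp (u * (starRingEnd ℂ) z - (‖z‖ ^ 2 : ℝ) / 2)

/-- The symbol `g_z(w) = e^{2i Im(w·conj(z)) + |z|²/2}`. -/
noncomputable def weylSymbol (z : ℂ) (w : ℂ) : ℂ :=
  Complex.exp (2 * Complex.I * ((w * (starRingEnd ℂ) z).im : ℂ) + (‖z‖ ^ 2 : ℝ) / 2)

open Set Real
open scoped NNReal ENNReal

lemma ofReal_abs_sq (w : ℂ) : ((‖w‖ ^ 2 : ℝ) : ℂ) = w * (starRingEnd ℂ) w := by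
  rw [← Complex.normSq_eq_norm_sq, Complex.mul_conj]

lemma integrable_mul_of_L2 {α : Type*} [MeasurableSpace α] {μ : Measure α} {φ ψ : α → ℝ}
    (hφ : MemLp φ 2 μ) (hψ : MemLp ψ 2 μ) : Integrable (fun x => φ x * ψ x) μ := by
  rw [← memLp_one_iff_integrable]
  refine ⟨hφ.1.mul hψ.1, ?_⟩
  calc eLpNorm (fun x => φ x * ψ x) 1 μ ≤ eLpNorm φ 2 μ * eLpNorm ψ 2 μ := by
        have := eLpNorm_le_eLpNorm_mul_eLpNorm_of_nnnorm (p := 2) (q := 2) (r := 1) hφ.1 hψ.1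
          (· * ·) 1 (Filter.Eventually.of_forall fun x => by simp [nnnorm_mul])
        rwa [ENNReal.coe_one, one_mul] at this
    _ < ⊤ := ENNReal.mul_lt_top hφ.2 hψ.2

lemma integrable_1d {m : ℝ} (_hm : 0 ≤ m) : Integrable (fun x : ℝ => Real.exp (m * |x| - x ^ 2)) := by
  have h : Integrable (fun x : ℝ => Real.exp (m ^ 2 / 2) * Real.exp (-(1/2 : ℝ) * x ^ 2)) :=
    (integrable_exp_neg_mul_sq (by norm_num)).const_mul _
  refine h.mono' (Continuous.aestronglyMeasurable (by continuity)) ?_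
  refine Filter.Eventually.of_forall fun x => ?_
  rw [Real.norm_eq_abs, abs_of_pos (Real.exp_pos _), ← Real.exp_add]
  apply Real.exp_le_exp.2
  nlinarith [sq_nonneg (|x| - m), _root_.sq_abs x]

lemma integrable_2d {m : ℝ} (hm : 0 ≤ m) :
    Integrable (fun w : ℂ => Real.exp (m * ‖w‖ - ‖w‖ ^ 2)) := by
  have key : Integrable (fun p : ℝ × ℝ =>
      Real.exp (m * |p.1| - p.1 ^ 2) * Real.exp (m * |p.2| - p.2 ^ 2)) (volume.prod volume) :=
    (integrable_1d hm).mul_prod (integrable_1d hm)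
  have hB : Integrable (fun w : ℂ =>
      Real.exp (m * |w.re| - w.re ^ 2) * Real.exp (m * |w.im| - w.im ^ 2)) volume := by
    have := Complex.volume_preserving_equiv_real_prod
    rw [← Measure.volume_eq_prod] at key
    exact (this.integrable_comp_emb Complex.measurableEquivRealProd.measurableEmbedding).2 key
  refine hB.mono' (Continuous.aestronglyMeasurable (by continuity)) ?_
  refine Filter.Eventually.of_forall fun w => ?_
  rw [Real.norm_eq_abs, abs_of_pos (Real.exp_pos _), ← Real.exp_add]
  apply Real.exp_le_exp.2
  have h1 : ‖w‖ ≤ |w.re| + |w.im| := Complex.norm_le_abs_re_add_abs_im w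
  have h2 : ‖w‖ ^ 2 = w.re ^ 2 + w.im ^ 2 := by
    rw [Complex.sq_norm, Complex.normSq_apply]; ring
  nlinarith [mul_le_mul_of_nonneg_left h1 hm]

lemma integrableOn_polar_real {E : Type*} [NormedAddCommGroup E] [NormedSpace ℝ E]
    {g : ℝ × ℝ → E} (hg : Integrable g volume) :
    IntegrableOn (fun p : ℝ × ℝ => p.1 • g (polarCoord.symm p)) polarCoord.target volume := by
  have h1 : IntegrableOn g (polarCoord.symm '' polarCoord.target) volume := by
    rw [polarCoord.symm_image_target_eq_source]
    exact hg.integrableOn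
  rw [integrableOn_image_iff_integrableOn_abs_det_fderiv_smul volume
    polarCoord.open_target.measurableSet
    (fun p _ => (hasFDerivAt_polarCoord_symm p).hasFDerivWithinAt)
    polarCoord.symm.injOn g] at h1
  refine h1.congr_fun (fun p hp => ?_) polarCoord.open_target.measurableSet
  have hdet : (LinearMap.toContinuousLinearMap (Matrix.toLin (Module.Basis.finTwoProd ℝ)
      (Module.Basis.finTwoProd ℝ)
      !![Real.cos p.2, -p.1 * Real.sin p.2; Real.sin p.2, p.1 * Real.cos p.2])).det = p.1 := by
    conv_rhs => rw [← one_mul p.1, ← Real.cos_sq_add_sin_sq p.2]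
    simp only [neg_mul, LinearMap.det_toContinuousLinearMap, LinearMap.det_toLin,
      Matrix.det_fin_two_of, sub_neg_eq_add]
    ring
  beta_reduce
  rw [det_fderivPolarCoordSymm, abs_of_pos hp.1]

lemma integrableOn_polar_complex {E : Type*} [NormedAddCommGroup E] [NormedSpace ℝ E]
    {g : ℂ → E} (hg : Integrable g volume) :
    IntegrableOn (fun p : ℝ × ℝ => p.1 • g (Complex.polarCoord.symm p)) polarCoord.target
      volume := by
  have h0 : Integrable (fun p : ℝ × ℝ => g (Complex.measurableEquivRealProd.symm p)) volume :=
    ((Complex.volume_preserving_equiv_real_prod.symm).integrable_comp_emb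
      Complex.measurableEquivRealProd.symm.measurableEmbedding).2 hg
  have hrfl : ∀ p : ℝ × ℝ,
      Complex.polarCoord.symm p = Complex.measurableEquivRealProd.symm (polarCoord.symm p) :=
    fun p => rfl
  simpa only [hrfl] using integrableOn_polar_real h0

lemma circle_mean {φ : ℂ → ℂ} (hφ : Differentiable ℂ φ) {r : ℝ} (hr : 0 < r) :
    ∫ θ in Ioo (-Real.pi) Real.pi, φ (circleMap 0 r θ) = (2 * Real.pi : ℝ) * φ 0 := by
  have hper : Function.Periodic (fun θ : ℝ => φ (circleMap 0 r θ)) (2 * Real.pi) :=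
    fun θ => congrArg φ (periodic_circleMap 0 r θ)
  have h1 : ∫ θ in Ioo (-Real.pi) Real.pi, φ (circleMap 0 r θ)
      = ∫ θ in (0)..(2 * Real.pi), φ (circleMap 0 r θ) := by
    rw [← MeasureTheory.integral_Ioc_eq_integral_Ioo,
      ← intervalIntegral.integral_of_le (by linarith [Real.pi_pos] : -Real.pi ≤ Real.pi)]
    have := hper.intervalIntegral_add_eq (-Real.pi) 0
    rw [show -Real.pi + 2 * Real.pi = Real.pi by ring, zero_add] at this
    exact this
  have hC : (∮ ζ in C(0, r), (ζ - 0)⁻¹ • φ ζ) = (2 * Real.pi * Complex.I : ℂ) • φ 0 :=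
    (hφ.differentiableOn).circleIntegral_sub_inv_smul (Metric.mem_ball_self hr)
  rw [circleIntegral] at hC
  have h2 : ∀ θ : ℝ, (deriv (circleMap 0 r) θ) • ((circleMap 0 r θ - 0)⁻¹ • φ (circleMap 0 r θ))
      = Complex.I * φ (circleMap 0 r θ) := by
    intro θ
    have hne : circleMap 0 r θ ≠ 0 := circleMap_ne_center hr.ne'
    rw [deriv_circleMap]
    simp only [smul_eq_mul, sub_zero]
    field_simp
  simp_rw [h2] at hC
  rw [intervalIntegral.integral_const_mul] at hC
  rw [h1]
  have := mul_left_cancel₀ Complex.I_ne_zero (by rw [hC, smul_eq_mul]; push_cast; ring :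
    Complex.I * ∫ θ in (0)..(2 * Real.pi), φ (circleMap 0 r θ)
      = Complex.I * ((2 * Real.pi : ℝ) * φ 0))
  exact this

lemma reproducing {h : ℂ → ℂ} (hd : Differentiable ℂ h) (a : ℂ)
    (hint : Integrable (fun w => h w * Complex.exp (a * (starRingEnd ℂ) w) *
      ((Real.exp (-‖w‖ ^ 2) : ℝ) : ℂ)) volume) :
    (∫ w : ℂ, h w * Complex.exp (a * (starRingEnd ℂ) w) *
      ((Real.exp (-‖w‖ ^ 2) : ℝ) : ℂ)) = (Real.pi : ℂ) * h a := by
  set G : ℂ → ℂ := fun w => h w * Complex.exp (a * (starRingEnd ℂ) w) *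
      ((Real.exp (-‖w‖ ^ 2) : ℝ) : ℂ) with hG
  set φ : ℂ → ℂ := fun v => h (v + a) * Complex.exp (-(v * (starRingEnd ℂ) a)) with hφdef
  have hφd : Differentiable ℂ φ :=
    (hd.comp (differentiable_id.add_const a)).mul
      ((differentiable_id.mul_const _).neg.cexp)
  have key : ∀ v : ℂ, G (v + a) = φ v * ((Real.exp (-‖v‖ ^ 2) : ℝ) : ℂ) := by
    intro v
    simp only [hG, hφdef]
    rw [Complex.ofReal_exp, Complex.ofReal_exp, Complex.ofReal_neg, Complex.ofReal_neg,
      ofReal_abs_sq, ofReal_abs_sq, mul_assoc, mul_assoc, ← Complex.exp_add, ← Complex.exp_add]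
    congr 1
    simp only [map_add]
    ring_nf
  have hψint : Integrable (fun v => φ v * ((Real.exp (-‖v‖ ^ 2) : ℝ) : ℂ)) volume := by
    have hmp : MeasurePreserving (fun v : ℂ => v + a) volume volume :=
      measurePreserving_add_right volume a
    have := (hmp.integrable_comp_emb (MeasurableEquiv.addRight a).measurableEmbedding).2 hint
    refine this.congr (Filter.Eventually.of_forall fun v => ?_)
    exact key v
  have step1 : (∫ w : ℂ, G w) = ∫ v : ℂ, φ v * ((Real.exp (-‖v‖ ^ 2) : ℝ) : ℂ) := by
    rw [← integral_add_right_eq_self G a]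
    exact integral_congr_ae (Filter.Eventually.of_forall key)
  rw [step1, ← Complex.integral_comp_polarCoord_symm
    (fun v => φ v * ((Real.exp (-‖v‖ ^ 2) : ℝ) : ℂ))]
  have hIntOn := integrableOn_polar_complex (E := ℂ) hψint
  rw [polarCoord_target] at hIntOn ⊢
  rw [Measure.volume_eq_prod] at hIntOn ⊢
  rw [setIntegral_prod _ hIntOn]
  have inner : ∀ r ∈ Ioi (0:ℝ),
      (∫ θ in Ioo (-Real.pi) Real.pi,
        r • (φ (Complex.polarCoord.symm (r, θ)) *
          ((Real.exp (-‖Complex.polarCoord.symm (r, θ)‖ ^ 2) : ℝ) : ℂ)))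
      = ((r : ℂ) * Complex.exp (-1 * (r : ℂ) ^ 2)) * ((2 * Real.pi : ℝ) * φ 0) := by
    intro r hr
    rw [mem_Ioi] at hr
    have hcm : ∀ θ : ℝ, Complex.polarCoord.symm (r, θ) = circleMap 0 r θ := by
      intro θ
      rw [Complex.polarCoord_symm_apply, circleMap, Complex.exp_mul_I]
      push_cast
      ring
    have hconst : ∀ θ : ℝ,
        r • (φ (Complex.polarCoord.symm (r, θ)) *
          ((Real.exp (-‖Complex.polarCoord.symm (r, θ)‖ ^ 2) : ℝ) : ℂ))
        = ((r : ℂ) * Complex.exp (-1 * (r : ℂ) ^ 2)) * φ (circleMap 0 r θ) := by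
      intro θ
      rw [hcm, norm_circleMap_zero, abs_of_pos hr, Complex.real_smul, Complex.ofReal_exp]
      push_cast
      ring_nf
    simp_rw [hconst]
    rw [integral_const_mul, circle_mean hφd hr]
  rw [setIntegral_congr_fun measurableSet_Ioi inner, MeasureTheory.integral_mul_const,
    integral_mul_cexp_neg_mul_sq (by norm_num : (0:ℝ) < (1:ℂ).re)]
  have hφ0 : φ 0 = h a := by simp [hφdef]
  rw [hφ0]
  push_cast
  ring

lemma gaussian_density_meas :
    Measurable fun z : ℂ => Real.toNNReal (Real.exp (-‖z‖ ^ 2) / Real.pi) :=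
  (((Real.continuous_exp.comp ((continuous_norm.pow 2).neg)).div_const
    Real.pi).measurable).real_toNNReal

lemma gaussianMeasure_eq :
    gaussianMeasure = (volume : Measure ℂ).withDensity
      fun z => ((Real.toNNReal (Real.exp (-‖z‖ ^ 2) / Real.pi) : ℝ≥0) : ENNReal) := rfl

lemma memL2_phi {f : ℂ → ℂ} (hfc : Continuous f) (hf2 : MemLp f 2 gaussianMeasure) :
    MemLp (fun w : ℂ => ‖f w‖ * Real.exp (-‖w‖ ^ 2 / 2)) 2 volume := by
  have hsq : Integrable (fun w : ℂ => ‖f w‖ ^ 2) gaussianMeasure :=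
    (memLp_two_iff_integrable_sq_norm hf2.1).1 hf2
  rw [gaussianMeasure_eq] at hsq
  replace hsq := (integrable_withDensity_iff_integrable_smul (E := ℝ) gaussian_density_meas).1 hsq
  have hsq2 : Integrable (fun w : ℂ =>
      Real.pi * ((Real.exp (-‖w‖ ^ 2) / Real.pi) * ‖f w‖ ^ 2)) volume := by
    refine (hsq.const_mul Real.pi).congr (Filter.Eventually.of_forall fun w => ?_)
    have h3 : ((Real.exp (-‖w‖ ^ 2) / Real.pi).toNNReal : ℝ≥0) • (‖f w‖ ^ 2 : ℝ)
        = Real.exp (-‖w‖ ^ 2) / Real.pi * ‖f w‖ ^ 2 := by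
      rw [NNReal.smul_def, Real.coe_toNNReal _ (by positivity), smul_eq_mul]
    simp only [h3]
  refine (memLp_two_iff_integrable_sq
    ((hfc.norm.mul (by continuity)).aestronglyMeasurable)).2 ?_
  refine hsq2.congr (Filter.Eventually.of_forall fun w => ?_)
  have hpi := Real.pi_ne_zero
  have h2 : Real.exp (-‖w‖ ^ 2 / 2) * Real.exp (-‖w‖ ^ 2 / 2)
      = Real.exp (-‖w‖ ^ 2) := by rw [← Real.exp_add]; ring_nf
  simp only [Pi.mul_apply]
  simp only [mul_pow, pow_two (Real.exp (-‖w‖ ^ 2 / 2)), h2]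
  field_simp

lemma memL2_psi {m : ℝ} (hm : 0 ≤ m) :
    MemLp (fun w : ℂ => Real.exp (m * ‖w‖) * Real.exp (-‖w‖ ^ 2 / 2)) 2
      volume := by
  refine (memLp_two_iff_integrable_sq (Continuous.aestronglyMeasurable (by continuity))).2 ?_
  refine (integrable_2d (m := 2 * m) (by linarith)).congr
    (Filter.Eventually.of_forall fun w => ?_)
  simp only [mul_pow, pow_two, ← Real.exp_add]
  ring_nf

lemma integrable_aux {f : ℂ → ℂ} (hfc : Continuous f) (hf2 : MemLp f 2 gaussianMeasure)
    (b c : ℂ) :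
    Integrable (fun w : ℂ => f w * Complex.exp (b * w + c * (starRingEnd ℂ) w) *
      ((Real.exp (-‖w‖ ^ 2) : ℝ) : ℂ)) volume := by
  set m : ℝ := ‖b‖ + ‖c‖ with hm
  have hm0 : 0 ≤ m := by positivity
  have hprod := integrable_mul_of_L2 (memL2_phi hfc hf2) (memL2_psi hm0)
  refine hprod.mono' (Continuous.aestronglyMeasurable (by continuity))
    (Filter.Eventually.of_forall fun w => ?_)
  rw [norm_mul, norm_mul,
    Complex.norm_exp, Complex.norm_real, Real.norm_eq_abs, abs_of_pos (Real.exp_pos _)]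
  have hre : (b * w + c * (starRingEnd ℂ) w).re ≤ m * ‖w‖ := by
    calc (b * w + c * (starRingEnd ℂ) w).re ≤ ‖b * w + c * (starRingEnd ℂ) w‖ :=
          Complex.re_le_norm _
    _ ≤ ‖b * w‖ + ‖c * (starRingEnd ℂ) w‖ := norm_add_le _ _
    _ = m * ‖w‖ := by
        rw [norm_mul, norm_mul, Complex.norm_conj, hm]; ring
  have hfw : (0:ℝ) ≤ ‖f w‖ := norm_nonneg _
  calc ‖f w‖ * Real.exp ((b * w + c * (starRingEnd ℂ) w).re)
        * Real.exp (-‖w‖ ^ 2)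
      ≤ ‖f w‖ * Real.exp (m * ‖w‖) * Real.exp (-‖w‖ ^ 2) := by
        have := Real.exp_le_exp.2 hre
        gcongr
    _ = ‖f w‖ * Real.exp (-‖w‖ ^ 2 / 2)
        * (Real.exp (m * ‖w‖) * Real.exp (-‖w‖ ^ 2 / 2)) := by
        rw [mul_assoc, ← Real.exp_add, ← Real.exp_add, mul_assoc, ← Real.exp_add]
        congr 1
        ring_nf

/-- The Weyl operator equals the Toeplitz operator with bounded symbol `g_z`:
for all entire `f ∈ L²(ℂ,μ)` and all `u`, `P(g_z f)(u) = k_z(u) f(u-z)`, where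
`P(g)(u) = ∫ g(w) e^{u·conj(w)} dμ(w)` is the projection onto the Fock space. -/
theorem weyl_eq_toeplitz (z : ℂ) (f : ℂ → ℂ) (hf : Differentiable ℂ f)
    (hf2 : MemLp f 2 gaussianMeasure) (u : ℂ) :
    ∫ w : ℂ, weylSymbol z w * f w * Complex.exp (u * (starRingEnd ℂ) w) ∂gaussianMeasure
      = normKernel z u * f (u - z) := by
  have hfc := hf.continuous
  set h : ℂ → ℂ := fun w => f w * Complex.exp (w * (starRingEnd ℂ) z) with hh
  have hhd : Differentiable ℂ h := hf.mul ((differentiable_id.mul_const _).cexp)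
  have hint : Integrable (fun w : ℂ => h w * Complex.exp ((u - z) * (starRingEnd ℂ) w) *
      ((Real.exp (-‖w‖ ^ 2) : ℝ) : ℂ)) volume := by
    refine (integrable_aux hfc hf2 ((starRingEnd ℂ) z) (u - z)).congr
      (Filter.Eventually.of_forall fun w => ?_)
    rw [hh]
    simp only []
    rw [Complex.exp_add]
    ring_nf
  have hrep := reproducing hhd (u - z) hint
  rw [gaussianMeasure_eq, integral_withDensity_eq_integral_smul gaussian_density_meas]
  have hpt : ∀ w : ℂ, (Real.toNNReal (Real.exp (-‖w‖ ^ 2) / Real.pi) : ℝ≥0) •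
      (weylSymbol z w * f w * Complex.exp (u * (starRingEnd ℂ) w))
      = (Real.pi⁻¹ : ℝ) • (Complex.exp (((‖z‖ ^ 2 : ℝ) : ℂ) / 2) *
        (h w * Complex.exp ((u - z) * (starRingEnd ℂ) w) *
          ((Real.exp (-‖w‖ ^ 2) : ℝ) : ℂ))) := by
    intro w
    have hkey : Complex.exp (2 * Complex.I * (((w * (starRingEnd ℂ) z).im : ℝ) : ℂ)
          + ((‖z‖ ^ 2 : ℝ) : ℂ) / 2)
        * Complex.exp (u * (starRingEnd ℂ) w) * Complex.exp (-((‖w‖ ^ 2 : ℝ) : ℂ))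
        = Complex.exp (((‖z‖ ^ 2 : ℝ) : ℂ) / 2) * Complex.exp (w * (starRingEnd ℂ) z)
          * Complex.exp ((u - z) * (starRingEnd ℂ) w)
          * Complex.exp (-((‖w‖ ^ 2 : ℝ) : ℂ)) := by
      rw [← Complex.exp_add, ← Complex.exp_add, ← Complex.exp_add, ← Complex.exp_add,
        ← Complex.exp_add]
      congr 1
      have hs := Complex.sub_conj (w * (starRingEnd ℂ) z)
      rw [map_mul, Complex.conj_conj] at hs
      push_cast at hs ⊢
      linear_combination -hs
    rw [NNReal.smul_def, Real.coe_toNNReal _ (by positivity), Complex.real_smul,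
      Complex.real_smul, weylSymbol, hh]
    simp only []
    push_cast at hkey ⊢
    rw [div_eq_mul_inv]
    linear_combination (f w * ((Real.pi : ℂ))⁻¹) * hkey
  rw [integral_congr_ae (Filter.Eventually.of_forall hpt), integral_smul, integral_const_mul,
    hrep]
  rw [hh]
  simp only []
  have hzz : ((‖z‖ ^ 2 : ℝ) : ℂ) = z * (starRingEnd ℂ) z := ofReal_abs_sq z
  have hexp2 : Complex.exp (((‖z‖ ^ 2 : ℝ) : ℂ) / 2)
      * Complex.exp ((u - z) * (starRingEnd ℂ) z)
      = Complex.exp (u * (starRingEnd ℂ) z - ((‖z‖ ^ 2 : ℝ) : ℂ) / 2) := by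
    rw [← Complex.exp_add]
    congr 1
    rw [hzz]  -- careful: rewrites both? fine
    ring
  have hpine : (Real.pi : ℂ) ≠ 0 := by
    simpa using Real.pi_ne_zero
  rw [Complex.real_smul, Complex.ofReal_inv, normKernel, ← hexp2]
  field_simp
end

section
/- If ψ is a nonzero element of F² and φ is entire such that sup_z |ψ(z)|² e^{|φ(z)|² - |z|²} < ∞, then φ is affine: there exist a, λ ∈ ℂ with |λ| ≤ 1 such that φ(w) = a + λw for all w. -/
open MeasureTheory Complex

section Auxiliary

open Complex Metric Real Set Filter Submodule ComplexConjugate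
open scoped NNReal

theorem meanValue (f : ℂ → ℂ) (hf : Differentiable ℂ f) (c : ℂ) (r : ℝ) (hr : 0 < r) :
    (∫ θ in (0:ℝ)..2*π, f (circleMap c r θ)) = (2*π : ℝ) * f c := by
  have h := (hf.differentiableOn (s := closedBall c r)).circleIntegral_sub_inv_smul
      (w := c) (mem_ball_self hr)
  rw [circleIntegral] at h
  simp only [deriv_circleMap, circleMap_sub_center, smul_eq_mul] at h
  have h2 : ∀ θ : ℝ, circleMap 0 r θ * I * ((circleMap 0 r θ)⁻¹ * f (circleMap c r θ))
      = I * f (circleMap c r θ) := by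
    intro θ
    have : circleMap 0 r θ ≠ 0 := circleMap_ne_center hr.ne'
    field_simp
  simp only [h2] at h
  rw [intervalIntegral.integral_const_mul] at h
  have hI : (I : ℂ) ≠ 0 := I_ne_zero
  apply mul_left_cancel₀ hI
  rw [h]; push_cast; ring

theorem meanValue_norm (f : ℂ → ℂ) (hf : Differentiable ℂ f) (c : ℂ) (r : ℝ) (hr : 0 < r) :
    (2*π) * ‖f c‖ ≤ ∫ θ in (0:ℝ)..2*π, ‖f (circleMap c r θ)‖ := by
  have h := meanValue f hf c r hr
  calc (2*π) * ‖f c‖ = ‖(2*π:ℝ) * f c‖ := by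
        rw [norm_mul, norm_real, Real.norm_of_nonneg Real.two_pi_pos.le]
    _ = ‖∫ θ in (0:ℝ)..2*π, f (circleMap c r θ)‖ := by rw [h]
    _ ≤ ∫ θ in (0:ℝ)..2*π, ‖f (circleMap c r θ)‖ :=
        intervalIntegral.norm_integral_le_integral_norm Real.two_pi_pos.le
    _ = _ := by simp

theorem trigQ (c : ℂ) (r : ℝ) (hr : 0 < r) (g : C(AddCircle (2*π), ℂ))
    (hg : g ∈ span ℂ (Set.range (@fourier (2*π)))) :
    ∃ Q₁ Q₂ : ℂ → ℂ, Differentiable ℂ Q₁ ∧ Differentiable ℂ Q₂ ∧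
      (∀ θ : ℝ, g ↑θ = Q₁ (circleMap c r θ) + conj (Q₂ (circleMap c r θ))) ∧
      (∫ θ in (0:ℝ)..2*π, g ↑θ) = (2*π:ℝ) * (Q₁ c + conj (Q₂ c)) := by
  haveI : Fact (0 < 2*π) := ⟨Real.two_pi_pos⟩
  induction hg using span_induction with
  | mem x hx =>
    obtain ⟨n, rfl⟩ := hx
    have key : ∀ k : ℕ, ∀ θ : ℝ, ((circleMap c r θ - c)/r)^k = Complex.exp (k * (θ * I)) := by
      intro k θ
      rw [circleMap, add_sub_cancel_left, mul_comm (r:ℂ), mul_div_assoc,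
        div_self (by exact_mod_cast hr.ne'), mul_one, ← Complex.exp_nat_mul]
    have hzero : ∀ k : ℕ, k ≠ 0 → ((c - c)/(r:ℂ))^k = 0 := by
      intro k hk
      rw [sub_self, zero_div]
      exact zero_pow hk
    have hfour : ∀ θ : ℝ, (fourier n) (θ : AddCircle (2*π)) = Complex.exp (n * (θ * I)) := by
      intro θ
      rw [fourier_coe_apply]
      congr 1
      have h2 : (2*(π:ℂ)) ≠ 0 := by
        simp only [ne_eq, mul_eq_zero, Complex.ofReal_eq_zero, OfNat.ofNat_ne_zero, false_or]
        exact_mod_cast Real.pi_ne_zero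
      push_cast
      field_simp
    have hint : ∀ m : ℤ, m ≠ 0 → (∫ θ in (0:ℝ)..2*π, Complex.exp (m * (θ * I))) = 0 := by
      intro m hm
      have h1 : ∀ θ : ℝ, (m : ℂ) * (θ * I) = (m * I) * θ := by intro θ; ring
      simp_rw [h1]
      rw [integral_exp_mul_complex (by simp [hm, Complex.I_ne_zero])]
      push_cast
      rw [show (m:ℂ) * I * (2*↑π) = m * (2*↑π*I) by ring, Complex.exp_int_mul_two_pi_mul_I]
      simp
    rcases le_or_gt 0 n with hn | hn
    · refine ⟨fun z => ((z - c)/r)^(n.toNat), 0, ?_, ?_, ?_, ?_⟩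
      · apply Differentiable.pow; apply Differentiable.div_const; simp [differentiable_id]
      · exact differentiable_const 0
      · intro θ
        simp only [Pi.zero_apply, map_zero, add_zero, key, hfour]
        congr 2
        exact_mod_cast (Int.toNat_of_nonneg hn).symm
      · simp_rw [hfour]
        rcases eq_or_lt_of_le hn with h0 | hpos
        · simp only [← h0]
          norm_num
        · rw [hint n hpos.ne']
          have hz := hzero n.toNat (by omega)
          simp [hz]
          try tauto
    · refine ⟨0, fun z => ((z - c)/r)^((-n).toNat), differentiable_const 0, ?_, ?_, ?_⟩
      · apply Differentiable.pow; apply Differentiable.div_const; simp [differentiable_id]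
      · intro θ
        simp only [Pi.zero_apply, zero_add, key, hfour]
        rw [← Complex.exp_conj]
        congr 1
        have h3 : (((-n).toNat : ℕ) : ℂ) = -(n : ℂ) := by
          have := Int.toNat_of_nonneg (show (0:ℤ) ≤ -n by omega)
          exact_mod_cast congrArg (fun m : ℤ => (m : ℂ)) this
        rw [map_mul, map_mul, Complex.conj_I, Complex.conj_ofReal, Complex.conj_natCast, h3]
        ring
      · simp_rw [hfour]
        rw [hint n hn.ne]
        have hz := hzero (-n).toNat (by omega)
        simp [hz]
        try tauto
  | zero =>
    exact ⟨0, 0, differentiable_const 0, differentiable_const 0, by simp, by simp⟩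
  | add x y hx hy ihx ihy =>
    obtain ⟨Q₁, Q₂, hd1, hd2, hcirc, hintx⟩ := ihx
    obtain ⟨P₁, P₂, hd3, hd4, hcircy, hinty⟩ := ihy
    refine ⟨Q₁ + P₁, Q₂ + P₂, hd1.add hd3, hd2.add hd4, ?_, ?_⟩
    · intro θ
      simp only [ContinuousMap.add_apply, Pi.add_apply, map_add, hcirc θ, hcircy θ]
      ring
    · have hix : IntervalIntegrable (fun θ : ℝ => x ↑θ) MeasureTheory.volume 0 (2*π) :=
        (x.continuous.comp (AddCircle.continuous_mk' _)).intervalIntegrable _ _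
      have hiy : IntervalIntegrable (fun θ : ℝ => y ↑θ) MeasureTheory.volume 0 (2*π) :=
        (y.continuous.comp (AddCircle.continuous_mk' _)).intervalIntegrable _ _
      simp only [ContinuousMap.add_apply]
      rw [intervalIntegral.integral_add hix hiy, hintx, hinty]
      simp only [Pi.add_apply, map_add]
      ring
  | smul a x hx ihx =>
    obtain ⟨Q₁, Q₂, hd1, hd2, hcirc, hintx⟩ := ihx
    refine ⟨fun z => a * Q₁ z, fun z => (conj a) * Q₂ z, hd1.const_mul _, hd2.const_mul _, ?_, ?_⟩
    · intro θ
      simp only [ContinuousMap.smul_apply, smul_eq_mul]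
      rw [hcirc θ]
      simp only [map_mul, Complex.conj_conj]
      ring
    · simp only [ContinuousMap.smul_apply, smul_eq_mul]
      rw [intervalIntegral.integral_const_mul, hintx]
      simp only [map_mul, Complex.conj_conj]
      ring

theorem jensen (f : ℂ → ℂ) (hf : Differentiable ℂ f) (c : ℂ) (r : ℝ) (hr : 0 < r)
    (hfc : f c ≠ 0) (hcirc : ∀ θ : ℝ, f (circleMap c r θ) ≠ 0) :
    2*π * Real.log (‖f c‖)
      ≤ ∫ θ in (0:ℝ)..2*π, Real.log (‖f (circleMap c r θ)‖) := by
  haveI : Fact (0 < 2*π) := ⟨Real.two_pi_pos⟩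
  set F : ℝ → ℝ := fun θ => Real.log (‖f (circleMap c r θ)‖) with hF
  have hFcont : Continuous F := by
    apply Continuous.log
    · exact continuous_norm.comp (hf.continuous.comp (continuous_circleMap c r))
    · intro θ; simpa using hcirc θ
  have hFper : Function.Periodic F (2*π) := fun θ => by
    simp only [hF, Function.comp_apply, (periodic_circleMap c r) θ]
  have hFint : IntervalIntegrable F MeasureTheory.volume 0 (2*π) :=
    hFcont.intervalIntegrable _ _
  -- the lifted continuous map on AddCircle
  set G : C(AddCircle (2*π), ℂ) :=
    ⟨fun x => ((hFper.lift x : ℝ) : ℂ),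
      Complex.continuous_ofReal.comp (hFcont.quotient_liftOn' _)⟩ with hG
  have hGcoe : ∀ θ : ℝ, G ↑θ = ((F θ : ℝ) : ℂ) := fun θ => by
    simp only [hG, ContinuousMap.coe_mk, Function.Periodic.lift_coe]
  -- approximate
  refine le_of_forall_pos_le_add (fun ε hε => ?_)
  have hεq : 0 < ε / (4*π) := by positivity
  have hGmem : G ∈ closure ((span ℂ (Set.range (@fourier (2*π)))) : Set C(AddCircle (2*π), ℂ)) := by
    have := span_fourier_closure_eq_top (T := 2*π)
    have h2 : G ∈ (span ℂ (Set.range (@fourier (2*π)))).topologicalClosure := by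
      rw [this]; trivial
    exact h2
  obtain ⟨g, hgmem, hgdist⟩ := Metric.mem_closure_iff.1 hGmem _ hεq
  obtain ⟨Q₁, Q₂, hQ1, hQ2, hQcirc, hQint⟩ := trigQ c r hr g hgmem
  set δ := ε / (4*π) with hδ
  have happrox : ∀ θ : ℝ, |F θ - (g ↑θ).re| ≤ δ := by
    intro θ
    have h1 : dist (G ↑θ) (g ↑θ) ≤ dist G g := ContinuousMap.dist_apply_le_dist _
    have h2 : |F θ - (g ↑θ).re| ≤ ‖G ↑θ - g ↑θ‖ := by
      rw [hGcoe θ]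
      have := Complex.abs_re_le_norm (((F θ : ℝ) : ℂ) - g ↑θ)
      simpa using this
    rw [Complex.dist_eq] at h1
    exact h2.trans (h1.trans hgdist.le)
  -- mean value applied to h = f * exp(-(Q₁+Q₂))
  set h : ℂ → ℂ := fun z => f z * Complex.exp (-(Q₁ z + Q₂ z)) with hh
  have hhd : Differentiable ℂ h := hf.mul (((hQ1.add hQ2).neg).cexp)
  have habs : ∀ z, ‖h z‖ = ‖f z‖ * Real.exp (-((Q₁ z).re + (Q₂ z).re)) := by
    intro z
    simp [hh, norm_mul, Complex.norm_exp]
  have hReQg : ∀ θ : ℝ, (Q₁ (circleMap c r θ)).re + (Q₂ (circleMap c r θ)).re = (g ↑θ).re := by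
    intro θ
    rw [hQcirc θ]
    simp [Complex.add_re, Complex.conj_re]
  have hbound : ∀ θ : ℝ, ‖h (circleMap c r θ)‖ ≤ Real.exp δ := by
    intro θ
    rw [habs, hReQg θ]
    have h1 : ‖f (circleMap c r θ)‖ = Real.exp (F θ) := by
      rw [hF]; exact (Real.exp_log (norm_pos_iff.2 (hcirc θ))).symm
    rw [h1, ← Real.exp_add]
    apply Real.exp_le_exp.2
    have := happrox θ
    have h2 : F θ - (g ↑θ).re ≤ δ := (abs_le.1 this).2
    linarith
  have hmv := meanValue_norm h hhd c r hr
  have hint2 : (∫ θ in (0:ℝ)..2*π, ‖h (circleMap c r θ)‖) ≤ 2*π * Real.exp δ := by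
    have hcont : Continuous fun θ : ℝ => ‖h (circleMap c r θ)‖ :=
      continuous_norm.comp (hhd.continuous.comp (continuous_circleMap c r))
    calc (∫ θ in (0:ℝ)..2*π, ‖h (circleMap c r θ)‖)
        ≤ ∫ _ in (0:ℝ)..2*π, Real.exp δ := by
          apply intervalIntegral.integral_mono_on Real.two_pi_pos.le
            (hcont.intervalIntegrable _ _) (intervalIntegrable_const)
          intro θ _; exact hbound θ
      _ = 2*π * Real.exp δ := by simp [mul_comm]
  have hhc : ‖h c‖ ≤ Real.exp δ := by
    nlinarith [Real.two_pi_pos, hmv.trans hint2, norm_nonneg (h c)]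
  have hfc' : ‖f c‖ ≤ Real.exp (δ + ((Q₁ c).re + (Q₂ c).re)) := by
    rw [habs c] at hhc
    have h5 := mul_le_mul_of_nonneg_right hhc (Real.exp_nonneg ((Q₁ c).re + (Q₂ c).re))
    rw [mul_assoc, ← Real.exp_add, neg_add_cancel, Real.exp_zero, mul_one,
      ← Real.exp_add] at h5
    exact h5
  have hlog : Real.log (‖f c‖) ≤ δ + ((Q₁ c).re + (Q₂ c).re) := by
    have := Real.log_le_log (norm_pos_iff.2 hfc) hfc'
    rwa [Real.log_exp] at this
  -- identify (Q₁ c).re + (Q₂ c).re with the average of Re g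
  have hgint : IntervalIntegrable (fun θ : ℝ => g ↑θ) MeasureTheory.volume 0 (2*π) :=
    (g.continuous.comp (AddCircle.continuous_mk' _)).intervalIntegrable _ _
  have hgreint : IntervalIntegrable (fun θ : ℝ => (g ↑θ).re) MeasureTheory.volume 0 (2*π) :=
    (Complex.continuous_re.comp (g.continuous.comp (AddCircle.continuous_mk' _))).intervalIntegrable _ _
  have hre : (∫ θ in (0:ℝ)..2*π, (g ↑θ).re) = 2*π * ((Q₁ c).re + (Q₂ c).re) := by
    have h3 : (∫ θ in (0:ℝ)..2*π, (g ↑θ).re) = (∫ θ in (0:ℝ)..2*π, g ↑θ).re := by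
      rw [intervalIntegral.integral_of_le Real.two_pi_pos.le,
          intervalIntegral.integral_of_le Real.two_pi_pos.le]
      have hInt : MeasureTheory.Integrable (fun θ : ℝ => g ↑θ)
          (MeasureTheory.volume.restrict (Set.Ioc (0:ℝ) (2*π))) :=
        (g.continuous.comp (AddCircle.continuous_mk' _)).integrableOn_Ioc
      have := _root_.integral_re (μ := MeasureTheory.volume.restrict (Set.Ioc (0:ℝ) (2*π))) hInt
      simpa using this
    rw [h3, hQint]
    simp [Complex.add_re, Complex.conj_re, Complex.ofReal_mul]
  have hrele : (∫ θ in (0:ℝ)..2*π, (g ↑θ).re) ≤ (∫ θ in (0:ℝ)..2*π, F θ) + 2*π*δ := by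
    have : (∫ θ in (0:ℝ)..2*π, (g ↑θ).re) ≤ ∫ θ in (0:ℝ)..2*π, (F θ + δ) := by
      apply intervalIntegral.integral_mono_on Real.two_pi_pos.le hgreint
        (hFint.add intervalIntegrable_const)
      intro θ _
      have := (abs_le.1 (happrox θ)).1
      linarith
    rw [intervalIntegral.integral_add hFint intervalIntegrable_const,
      intervalIntegral.integral_const, smul_eq_mul, sub_zero] at this
    linarith
  have hπ : (0:ℝ) < π := Real.pi_pos
  have hδε : 4 * π * δ = ε := by
    rw [hδ]; field_simp
  nlinarith [hlog, hre, hrele]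

theorem good_radii (ψ : ℂ → ℂ) (hψ : Differentiable ℂ ψ) (z₀ : ℂ) (hz : ψ z₀ ≠ 0) (R : ℝ) :
    ∃ r : ℝ, R < r ∧ ∀ θ : ℝ, ψ (circleMap z₀ r θ) ≠ 0 := by
  set m := max R 1 with hm
  set S : Set ℂ := {z | ψ z = 0} ∩ closedBall z₀ (m + 1) with hS
  have hnotloc : ∀ x : ℂ, ¬ (∀ᶠ z in nhds x, ψ z = 0) := by
    intro x hev
    have h1 : AnalyticOnNhd ℂ ψ Set.univ :=
      fun z _ => hψ.analyticAt z
    have h2 := h1.eqOn_zero_of_preconnected_of_eventuallyEq_zero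
      isPreconnected_univ (Set.mem_univ x) (hev.filter_mono (by simp [nhdsWithin_le_nhds]))
    exact hz (h2 (Set.mem_univ z₀))
  have hSfin : S.Finite := by
    rw [← Set.not_infinite]
    intro hinf
    have hcpt : IsCompact (closedBall z₀ (m+1)) := isCompact_closedBall _ _
    let u := hinf.natEmbedding
    have husub : ∀ n, (u n : ℂ) ∈ closedBall z₀ (m+1) := fun n => (u n).2.2
    obtain ⟨x, -, φ', hφ'mono, hφ'tend⟩ := hcpt.tendsto_subseq husub
    have hψx : ψ x = 0 := by
      have : Tendsto (fun k => ψ (u (φ' k) : ℂ)) atTop (nhds (ψ x)) :=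
        (hψ.continuous.tendsto x).comp hφ'tend
      have heq : ∀ k, ψ (u (φ' k) : ℂ) = 0 := fun k => (u (φ' k)).2.1
      have h0 : Tendsto (fun _ : ℕ => (0:ℂ)) atTop (nhds (ψ x)) := by
        simpa [heq] using this
      exact tendsto_nhds_unique h0 tendsto_const_nhds
    rcases (hψ.analyticAt x).eventually_eq_zero_or_eventually_ne_zero with hcase | hcase
    · exact hnotloc x hcase
    · -- the subsequence gives frequently zero in punctured nbhd
      have hne : ∀ᶠ k in atTop, (u (φ' k) : ℂ) ≠ x := by
        rcases Classical.em (∃ k₀, (u (φ' k₀) : ℂ) = x) with ⟨k₀, hk₀⟩ | hno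
        · refine eventually_atTop.2 ⟨k₀ + 1, fun k hk hkx => ?_⟩
          have : u (φ' k) = u (φ' k₀) := by
            apply Subtype.ext
            rw [hkx, hk₀]
          have := u.injective this
          have := hφ'mono.injective this
          omega
        · push_neg at hno
          exact Eventually.of_forall hno
      have htd : Tendsto (fun k => (u (φ' k) : ℂ)) atTop (nhdsWithin x {x}ᶜ) :=
        tendsto_nhdsWithin_iff.2 ⟨hφ'tend, hne⟩
      have := (htd.eventually hcase).and (Eventually.of_forall (fun k => (u (φ' k)).2.1))
      obtain ⟨k, hk1, hk2⟩ := this.exists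
      exact hk1 hk2
  set B : Set ℝ := (fun z => dist z z₀) '' S with hB
  have hBfin : B.Finite := hSfin.image _
  have hIoo : (Set.Ioo m (m+1)).Infinite := Set.Ioo_infinite (by linarith)
  obtain ⟨r, hr⟩ := (hIoo.diff hBfin).nonempty
  refine ⟨r, lt_of_le_of_lt (le_max_left R 1) hr.1.1, fun θ hzero => ?_⟩
  apply hr.2
  have h0 : (0:ℝ) ≤ r := le_trans (le_trans zero_le_one (le_max_right R 1)) hr.1.1.le
  have hdist : dist (circleMap z₀ r θ) z₀ = r := by
    have := circleMap_mem_sphere z₀ h0 θ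
    rwa [mem_sphere] at this
  refine ⟨circleMap z₀ r θ, ⟨hzero, ?_⟩, hdist⟩
  rw [mem_closedBall, hdist]
  exact hr.1.2.le

end Auxiliary

open Complex Metric Real Set Filter Submodule ComplexConjugate
open scoped NNReal

set_option maxHeartbeats 1000000 in
open MeasureTheory in
/-- If `ψ` is a nonzero element of the Fock space and `φ` is entire with
`sup_z |ψ(z)|² e^{|φ(z)|² - |z|²} < ∞`, then `φ` is affine: `φ(w) = a + λw` with `|λ| ≤ 1`. -/
theorem symbol_affine (ψ φ : ℂ → ℂ)
    (hψ : Differentiable ℂ ψ) (hψ2 : MemLp ψ 2 gaussianMeasure) (hψ0 : ψ ≠ 0)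
    (hφ : Differentiable ℂ φ)
    (hM : ∃ C : ℝ, ∀ z : ℂ,
      ‖ψ z‖ ^ 2 * Real.exp (‖φ z‖ ^ 2 - ‖z‖ ^ 2) ≤ C) :
    ∃ a lam : ℂ, ‖lam‖ ≤ 1 ∧ ∀ w : ℂ, φ w = a + lam * w := by
  classical
  obtain ⟨C, hC⟩ := hM
  obtain ⟨z₀, hz₀⟩ : ∃ z, ψ z ≠ 0 := by
    by_contra h
    push_neg at h
    exact hψ0 (funext fun z => h z)
  have hψpos : 0 < ‖ψ z₀‖ := norm_pos_iff.2 hz₀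
  have hCpos : 0 < C := lt_of_lt_of_le (by positivity) (hC z₀)
  set A : ℝ := Real.log C - 2 * Real.log (‖ψ z₀‖) with hA
  -- pointwise bound where ψ ≠ 0
  have hpt : ∀ z, ψ z ≠ 0 →
      (‖φ z‖)^2 ≤ (‖z‖)^2 + Real.log C
        - 2 * Real.log (‖ψ z‖) := by
    intro z hz
    have ha : (0:ℝ) < (‖ψ z‖)^2 := by
      have := norm_pos_iff.2 hz
      positivity
    have h2 := Real.log_le_log (by positivity) (hC z)
    rw [Real.log_mul ha.ne' (Real.exp_ne_zero _), Real.log_exp, Real.log_pow] at h2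
    push_cast at h2
    linarith
  -- L² bound on good circles
  have hL2 : ∀ r : ℝ, 0 < r → (∀ θ : ℝ, ψ (circleMap z₀ r θ) ≠ 0) →
      (∫ θ in (0:ℝ)..2*π, (‖φ (circleMap z₀ r θ)‖)^2)
        ≤ 2*π*((‖z₀‖ + r)^2 + A) := by
    intro r hr hgood
    have hcφ : Continuous fun θ : ℝ => (‖φ (circleMap z₀ r θ)‖)^2 :=
      (continuous_norm.comp (hφ.continuous.comp (continuous_circleMap _ _))).pow 2
    have hcψ : Continuous fun θ : ℝ => Real.log (‖ψ (circleMap z₀ r θ)‖) := by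
      apply Continuous.log
      · exact continuous_norm.comp (hψ.continuous.comp (continuous_circleMap _ _))
      · intro θ; simpa using hgood θ
    have hcz : Continuous fun θ : ℝ => (‖circleMap z₀ r θ‖)^2 :=
      (continuous_norm.comp (continuous_circleMap _ _)).pow 2
    have h1 : (∫ θ in (0:ℝ)..2*π, (‖φ (circleMap z₀ r θ)‖)^2)
        ≤ ∫ θ in (0:ℝ)..2*π, ((‖circleMap z₀ r θ‖)^2 + Real.log C
            - 2 * Real.log (‖ψ (circleMap z₀ r θ)‖)) := by
      apply intervalIntegral.integral_mono_on Real.two_pi_pos.le (hcφ.intervalIntegrable _ _)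
        (((hcz.add continuous_const).sub (continuous_const.mul hcψ)).intervalIntegrable _ _)
      intro θ _
      exact hpt _ (hgood θ)
    have h2 : (∫ θ in (0:ℝ)..2*π, ((‖circleMap z₀ r θ‖)^2 + Real.log C
            - 2 * Real.log (‖ψ (circleMap z₀ r θ)‖)))
        = (∫ θ in (0:ℝ)..2*π, ((‖circleMap z₀ r θ‖)^2 + Real.log C))
          - 2 * ∫ θ in (0:ℝ)..2*π, Real.log (‖ψ (circleMap z₀ r θ)‖) := by
      rw [intervalIntegral.integral_sub (f := fun θ => ‖circleMap z₀ r θ‖^2 + Real.log C)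
        (g := fun θ => 2 * Real.log ‖ψ (circleMap z₀ r θ)‖) ((hcz.add continuous_const).intervalIntegrable _ _)
        ((continuous_const.mul hcψ).intervalIntegrable _ _), intervalIntegral.integral_const_mul]
    have h3 : (∫ θ in (0:ℝ)..2*π, ((‖circleMap z₀ r θ‖)^2 + Real.log C))
        ≤ ∫ _θ in (0:ℝ)..2*π, ((‖z₀‖ + r)^2 + Real.log C) := by
      apply intervalIntegral.integral_mono_on Real.two_pi_pos.le
        ((hcz.add continuous_const).intervalIntegrable _ _) intervalIntegrable_const
      intro θ _
      have htri : ‖circleMap z₀ r θ‖ ≤ ‖z₀‖ + r := by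
        calc ‖circleMap z₀ r θ‖
            ≤ ‖z₀‖ + ‖(r:ℂ) * Complex.exp (θ * I)‖ :=
              norm_add_le _ _
          _ = ‖z₀‖ + r := by
              rw [norm_mul, Complex.norm_exp_ofReal_mul_I]
              simp [Complex.norm_real, _root_.abs_of_pos hr]
      have h0 : 0 ≤ ‖circleMap z₀ r θ‖ := norm_nonneg _
      simp only [Pi.add_apply]
      nlinarith
    have h4 := jensen ψ hψ z₀ r hr hz₀ hgood
    have h5 : (∫ _θ in (0:ℝ)..2*π, ((‖z₀‖ + r)^2 + Real.log C))
        = 2*π*((‖z₀‖ + r)^2 + Real.log C) := by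
      rw [intervalIntegral.integral_const, smul_eq_mul, sub_zero]
    rw [h2] at h1
    rw [h5] at h3
    rw [hA]
    linarith
  -- L¹ bound on good circles
  have hL1 : ∀ r : ℝ, 1 ≤ r → (∀ θ : ℝ, ψ (circleMap z₀ r θ) ≠ 0) →
      (∫ θ in (0:ℝ)..2*π, ‖φ (circleMap z₀ r θ)‖)
        ≤ π * (((‖z₀‖ + r)^2 + A) / r + r) := by
    intro r hr hgood
    have hr0 : (0:ℝ) < r := lt_of_lt_of_le zero_lt_one hr
    have hcφ1 : Continuous fun θ : ℝ => ‖φ (circleMap z₀ r θ)‖ :=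
      continuous_norm.comp (hφ.continuous.comp (continuous_circleMap _ _))
    have h1 : (∫ θ in (0:ℝ)..2*π, ‖φ (circleMap z₀ r θ)‖)
        ≤ ∫ θ in (0:ℝ)..2*π, ((‖φ (circleMap z₀ r θ)‖)^2 / (2*r) + r/2) := by
      apply intervalIntegral.integral_mono_on Real.two_pi_pos.le (hcφ1.intervalIntegrable _ _)
        ((((hcφ1.pow 2).div_const _).add continuous_const).intervalIntegrable _ _)
      intro θ _
      simp only [Pi.add_apply, Pi.pow_apply]
      set a := ‖φ (circleMap z₀ r θ)‖ with haa
      rw [← sub_nonneg]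
      have heq : a^2/(2*r) + r/2 - a = (a - r)^2 / (2*r) := by
        field_simp
        ring
      rw [heq]
      positivity
    have h2 : (∫ θ in (0:ℝ)..2*π, ((‖φ (circleMap z₀ r θ)‖)^2 / (2*r) + r/2))
        = (∫ θ in (0:ℝ)..2*π, (‖φ (circleMap z₀ r θ)‖)^2) / (2*r) + 2*π*(r/2) := by
      rw [intervalIntegral.integral_add (f := fun θ => ‖φ (circleMap z₀ r θ)‖^2 / (2*r))
        (g := fun _ => r/2) (((hcφ1.pow 2).div_const _).intervalIntegrable _ _)
        intervalIntegrable_const, intervalIntegral.integral_div,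
        intervalIntegral.integral_const, smul_eq_mul, sub_zero]
    have h3 := hL2 r hr0 hgood
    have h4 : (∫ θ in (0:ℝ)..2*π, (‖φ (circleMap z₀ r θ)‖)^2) / (2*r)
        ≤ (2*π*((‖z₀‖ + r)^2 + A)) / (2*r) := by
      apply div_le_div_of_nonneg_right h3 (by linarith)
    have h5 : (2*π*((‖z₀‖ + r)^2 + A)) / (2*r) = π * (((‖z₀‖ + r)^2 + A)/r) := by
      field_simp
    calc (∫ θ in (0:ℝ)..2*π, ‖φ (circleMap z₀ r θ)‖)
        ≤ (∫ θ in (0:ℝ)..2*π, (‖φ (circleMap z₀ r θ)‖)^2) / (2*r) + 2*π*(r/2) := by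
          rw [← h2]; exact h1
      _ ≤ (2*π*((‖z₀‖ + r)^2 + A)) / (2*r) + 2*π*(r/2) := by linarith
      _ = π * (((‖z₀‖ + r)^2 + A) / r + r) := by rw [h5]; ring
  -- Cauchy estimates for iterated derivatives
  have hcoeff : ∀ (n : ℕ) (r : ℝ), 0 < r →
      ‖iteratedDeriv n φ z₀‖ ≤ (n.factorial : ℝ) * ((2*π)⁻¹
        * (∫ θ in (0:ℝ)..2*π, ‖φ (circleMap z₀ r θ)‖) * (r⁻¹)^n) := by
    intro n r hr
    have hrn : (0:ℝ≥0) < r.toNNReal := by simpa using hr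
    have hcoe : ((r.toNNReal : ℝ)) = r := Real.coe_toNNReal _ hr.le
    have hball := hφ.hasFPowerSeriesOnBall z₀ hrn
    have h1 := hball.factorial_smul (y := (1:ℂ)) n
    have h3 := norm_cauchyPowerSeries_le φ z₀ (r.toNNReal : ℝ) n
    rw [hcoe] at h1 h3
    have h2 : iteratedDeriv n φ z₀ = iteratedFDeriv ℂ n φ z₀ (fun _ => 1) :=
      iteratedDeriv_eq_iteratedFDeriv
    calc ‖iteratedDeriv n φ z₀‖
        = ‖(n.factorial) • (cauchyPowerSeries φ z₀ r n) (fun _ => (1:ℂ))‖ := by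
          rw [h2, ← h1]
      _ = (n.factorial : ℝ) * ‖(cauchyPowerSeries φ z₀ r n) (fun _ => (1:ℂ))‖ := by
          rw [← Nat.cast_smul_eq_nsmul ℝ, norm_smul]
          simp
      _ ≤ (n.factorial : ℝ) * ‖cauchyPowerSeries φ z₀ r n‖ := by
          apply mul_le_mul_of_nonneg_left _ (Nat.cast_nonneg _)
          have := (cauchyPowerSeries φ z₀ r n).le_opNorm (fun _ => (1:ℂ))
          simpa using this
      _ ≤ (n.factorial : ℝ) * ((2*π)⁻¹
          * (∫ θ in (0:ℝ)..2*π, ‖φ (circleMap z₀ r θ)‖) * (r⁻¹)^n) := by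
          apply mul_le_mul_of_nonneg_left _ (Nat.cast_nonneg _)
          have habs : |r| = r := _root_.abs_of_pos hr
          calc ‖cauchyPowerSeries φ z₀ r n‖
              ≤ ((2*π)⁻¹ * ∫ θ in (0:ℝ)..2*π, ‖φ (circleMap z₀ r θ)‖) * (|r|⁻¹)^n := h3
            _ = (2*π)⁻¹ * (∫ θ in (0:ℝ)..2*π, ‖φ (circleMap z₀ r θ)‖) * (r⁻¹)^n := by
                rw [habs]
  -- uniform coarse bound on good circles
  set K : ℝ := (1 + ‖z₀‖)^2 + |A| + 1 with hK
  have hKpos : 0 < K := by positivity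
  have hL1' : ∀ r : ℝ, 1 ≤ r → (∀ θ : ℝ, ψ (circleMap z₀ r θ) ≠ 0) →
      (∫ θ in (0:ℝ)..2*π, ‖φ (circleMap z₀ r θ)‖) ≤ π * (K * r) := by
    intro r hr hgood
    have hr0 : (0:ℝ) < r := lt_of_lt_of_le zero_lt_one hr
    refine (hL1 r hr hgood).trans ?_
    have h4 : (1:ℝ) ≤ r^2 := by nlinarith
    have h1 : ((‖z₀‖ + r)^2 + A)/r + r ≤ K * r := by
      have h2 : ((‖z₀‖ + r)^2 + A)/r ≤ ((‖z₀‖ + r)^2 + |A|)/r := by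
        gcongr
        exact le_abs_self A
      have h3 : ((‖z₀‖ + r)^2 + |A|)/r ≤ (K - 1) * r := by
        rw [div_le_iff₀ hr0, hK]
        have hz0 := norm_nonneg z₀
        have hrr2 : r ≤ r^2 := by nlinarith
        have e1 : (‖z₀‖)^2 ≤ (‖z₀‖)^2 * r^2 := by
          nlinarith [sq_nonneg (‖z₀‖)]
        have e2 : 2*(‖z₀‖)*r ≤ 2*(‖z₀‖)*r^2 := by nlinarith
        have e3 : |A| ≤ |A| * r^2 := by nlinarith [abs_nonneg A]
        nlinarith [e1, e2, e3]
      linarith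
    have := mul_le_mul_of_nonneg_left h1 Real.pi_pos.le
    linarith
  -- vanishing of higher derivatives
  have hzero : ∀ n : ℕ, 2 ≤ n → iteratedDeriv n φ z₀ = 0 := by
    intro n hn
    have hb : ∀ ε : ℝ, 0 < ε → ‖iteratedDeriv n φ z₀‖ ≤ 0 + ε := by
      intro ε hε
      set c := (n.factorial : ℝ) * ((2*π)⁻¹ * (π * K)) with hc
      have hcpos : 0 < c := by positivity
      obtain ⟨r, hrR, hgood⟩ := good_radii ψ hψ z₀ hz₀ (max 1 (c/ε))
      have hr1 : 1 ≤ r := lt_of_le_of_lt (le_max_left _ _) hrR |>.le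
      have hrc : c/ε < r := lt_of_le_of_lt (le_max_right _ _) hrR
      have hr0 : (0:ℝ) < r := lt_of_lt_of_le zero_lt_one hr1
      have h := hcoeff n r hr0
      have hIb := hL1' r hr1 hgood
      have hinv1 : r⁻¹ ≤ 1 := by
        rw [inv_le_one_iff₀]
        right; exact hr1
      have hinv0 : (0:ℝ) ≤ r⁻¹ := (inv_pos.2 hr0).le
      have hpow : (r⁻¹)^n ≤ (r⁻¹)^2 := pow_le_pow_of_le_one hinv0 hinv1 hn
      have h6 : ‖iteratedDeriv n φ z₀‖ ≤ (n.factorial : ℝ) * ((2*π)⁻¹ * (π * (K*r)) * (r⁻¹)^n) := by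
        refine h.trans ?_
        apply mul_le_mul_of_nonneg_left _ (Nat.cast_nonneg _)
        apply mul_le_mul_of_nonneg_right _ (by positivity)
        apply mul_le_mul_of_nonneg_left hIb (by positivity)
      have h7 : (n.factorial : ℝ) * ((2*π)⁻¹ * (π * (K*r)) * (r⁻¹)^n) ≤ c * (r * (r⁻¹)^2) := by
        have : (n.factorial : ℝ) * ((2*π)⁻¹ * (π * (K*r)) * (r⁻¹)^n)
            = c * (r * (r⁻¹)^n) := by rw [hc]; ring
        rw [this]
        apply mul_le_mul_of_nonneg_left _ hcpos.le
        exact mul_le_mul_of_nonneg_left hpow hr0.le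
      have h8 : c * (r * (r⁻¹)^2) = c * r⁻¹ := by
        congr 1
        rw [pow_two]
        field_simp
      have h9 : c * r⁻¹ ≤ ε := by
        have hcr : c ≤ ε * r := by
          have := (div_le_iff₀ hε).1 hrc.le
          linarith
        calc c * r⁻¹ ≤ (ε * r) * r⁻¹ := by gcongr
          _ = ε := by field_simp
      rw [h8] at h7
      linarith [h6.trans h7]
    have := le_of_forall_pos_le_add hb
    simpa using norm_le_zero_iff.1 (by linarith [this])
  -- derivative bound
  have hD1 : ‖deriv φ z₀‖ ≤ 1 := by
    set c₁ : ℝ := ‖z₀‖ + ((‖z₀‖)^2 + |A|)/2 with hc₁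
    have hc₁0 : 0 ≤ c₁ := by positivity
    apply le_of_forall_pos_le_add
    intro ε hε
    obtain ⟨r, hrR, hgood⟩ := good_radii ψ hψ z₀ hz₀ (max 1 (c₁/ε))
    have hr1 : 1 ≤ r := lt_of_le_of_lt (le_max_left _ _) hrR |>.le
    have hrc : c₁/ε < r := lt_of_le_of_lt (le_max_right _ _) hrR
    have hr0 : (0:ℝ) < r := lt_of_lt_of_le zero_lt_one hr1
    have h := hcoeff 1 r hr0
    have hIb := hL1 r hr1 hgood
    have h6 : ‖deriv φ z₀‖
        ≤ (2*π)⁻¹ * (π * (((‖z₀‖ + r)^2 + A)/r + r)) * r⁻¹ := by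
      rw [iteratedDeriv_one] at h
      refine h.trans ?_
      simp only [Nat.factorial_one, Nat.cast_one, one_mul, pow_one]
      apply mul_le_mul_of_nonneg_right _ (inv_pos.2 hr0).le
      exact mul_le_mul_of_nonneg_left hIb (by positivity)
    have h8 : (2*π)⁻¹ * (π * (((‖z₀‖ + r)^2 + A)/r + r)) * r⁻¹
        = ((‖z₀‖ + r)^2 + A + r^2) / (2*r^2) := by
      field_simp
    have h9 : ((‖z₀‖ + r)^2 + A + r^2) / (2*r^2) ≤ 1 + c₁/r := by
      rw [div_le_iff₀ (by positivity : (0:ℝ) < 2*r^2)]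
      have expand : (1 + c₁/r) * (2*r^2) = 2*r^2 + 2*c₁*r := by
        field_simp
      rw [expand, hc₁]
      have hAa := le_abs_self A
      have a1 : (‖z₀‖)^2 * 1 ≤ (‖z₀‖)^2 * r :=
        mul_le_mul_of_nonneg_left hr1 (by positivity)
      have a2 : |A| * 1 ≤ |A| * r := mul_le_mul_of_nonneg_left hr1 (abs_nonneg A)
      nlinarith [a1, a2, hAa]
    have h10 : c₁/r ≤ ε := by
      have hcr : c₁ < r * ε := by
        have := (div_lt_iff₀ hε).1 hrc
        linarith
      rw [div_le_iff₀ hr0]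
      linarith [hcr]
    calc ‖deriv φ z₀‖ ≤ ((‖z₀‖ + r)^2 + A + r^2) / (2*r^2) := by rw [← h8]; exact h6
      _ ≤ 1 + c₁/r := h9
      _ ≤ 1 + ε := by linarith
  -- assemble
  refine ⟨φ z₀ - deriv φ z₀ * z₀, deriv φ z₀, ?_, ?_⟩
  · simpa using hD1
  · intro w
    have hsum := Complex.hasSum_taylorSeries_of_entire hφ z₀ w
    have hvanish : ∀ n ∉ ({0,1} : Finset ℕ),
        ((n.factorial : ℂ)⁻¹ • (w - z₀)^n • iteratedDeriv n φ z₀) = 0 := by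
      intro n hn
      simp only [Finset.mem_insert, Finset.mem_singleton] at hn
      have h2 : 2 ≤ n := by omega
      rw [hzero n h2]
      simp
    have hsum2 := hasSum_sum_of_ne_finset_zero (L := SummationFilter.unconditional ℕ) hvanish
    have heq := hsum.unique hsum2
    rw [heq]
    rw [Finset.sum_pair (by norm_num : (0:ℕ) ≠ 1)]
    simp only [pow_zero, pow_one, Nat.factorial_zero, Nat.factorial_one, Nat.cast_one, inv_one,
      one_smul, iteratedDeriv_zero, iteratedDeriv_one, smul_eq_mul]
    ring
end

section
/- If ψ ∈ F² is nonzero, φ(w) = a + λw with |λ| = 1, and sup_z |ψ(z)|² e^{|φ(z)|² - |z|²} < ∞, then ψ(w) = ψ(0) e^{-conj(a)λw} for all w, and the function z ↦ |ψ(z)|² e^{|φ(z)|²-|z|²} is a positive constant. -/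
open MeasureTheory Complex

/-!
For `|λ| = 1` one has `|a + λz|² - |z|² = |a|² + 2 Re(āλz)`, so the weight
`|ψ(z)|² e^{|φ(z)|² - |z|²}` equals `e^{|a|²} |g(z)|²` with `g(z) = ψ(z) e^{āλz}` entire.
Boundedness of the weight makes `g` a bounded entire function, hence constant by Liouville.
-/

lemma norm_add_mul_sq_sub_norm_sq {a lam : ℂ} (hlam : ‖lam‖ = 1) (z : ℂ) :
    ‖a + lam * z‖ ^ 2 - ‖z‖ ^ 2 = ‖a‖ ^ 2 + 2 * (starRingEnd ℂ a * lam * z).re := by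
  have hnorm : ‖lam * z‖ ^ 2 = ‖z‖ ^ 2 := by rw [norm_mul, hlam, one_mul]
  have hcross : (a * starRingEnd ℂ (lam * z)).re = (starRingEnd ℂ a * lam * z).re := by
    simp only [mul_re, conj_re, conj_im, mul_im, map_mul]
    ring
  rw [Complex.sq_norm, normSq_add, ← Complex.sq_norm, ← Complex.sq_norm, hnorm, hcross]
  ring

lemma norm_mul_exp_sq (u w : ℂ) : ‖u * exp w‖ ^ 2 = ‖u‖ ^ 2 * Real.exp (2 * w.re) := by
  rw [norm_mul, norm_exp, mul_pow, ← Real.exp_nat_mul]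
  norm_num

lemma norm_sq_mul_exp_norm_add_mul_sq_sub {a lam : ℂ} (hlam : ‖lam‖ = 1) (u z : ℂ) :
    ‖u‖ ^ 2 * Real.exp (‖a + lam * z‖ ^ 2 - ‖z‖ ^ 2) =
      ‖u * exp (starRingEnd ℂ a * lam * z)‖ ^ 2 * Real.exp (‖a‖ ^ 2) := by
  rw [norm_add_mul_sq_sub_norm_sq hlam, norm_mul_exp_sq, Real.exp_add]
  ring

lemma Differentiable.apply_eq_apply_zero_of_norm_sq_le {g : ℂ → ℂ} (hg : Differentiable ℂ g)
    {C : ℝ} (hC : ∀ z, ‖g z‖ ^ 2 ≤ C) (z : ℂ) : g z = g 0 := by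
  refine hg.apply_eq_apply_of_bounded ?_ z 0
  refine isBounded_iff_forall_norm_le.mpr ⟨√C, ?_⟩
  rintro _ ⟨w, rfl⟩
  simpa using Real.abs_le_sqrt (hC w)

theorem multiplier_form_of_unimodular_general (ψ φ : ℂ → ℂ) (a lam : ℂ)
    (hψ : Differentiable ℂ ψ) (hψ0 : ψ ≠ 0)
    (hφ : ∀ w : ℂ, φ w = a + lam * w) (hlam : ‖lam‖ = 1)
    (hM : ∃ C : ℝ, ∀ z : ℂ,
      ‖ψ z‖ ^ 2 * Real.exp (‖φ z‖ ^ 2 - ‖z‖ ^ 2) ≤ C) :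
    (∀ w : ℂ, ψ w = ψ 0 * Complex.exp (-(starRingEnd ℂ) a * lam * w)) ∧
      ∃ c : ℝ, 0 < c ∧ ∀ z : ℂ,
        ‖ψ z‖ ^ 2 * Real.exp (‖φ z‖ ^ 2 - ‖z‖ ^ 2) = c := by
  obtain ⟨C, hC⟩ := hM
  set g : ℂ → ℂ := fun z => ψ z * exp (starRingEnd ℂ a * lam * z)
  have hweight (z : ℂ) : ‖ψ z‖ ^ 2 * Real.exp (‖φ z‖ ^ 2 - ‖z‖ ^ 2) =
      ‖g z‖ ^ 2 * Real.exp (‖a‖ ^ 2) := by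
    rw [hφ, norm_sq_mul_exp_norm_add_mul_sq_sub hlam]
  have hg_const (z : ℂ) : g z = ψ 0 := by
    have hg_bdd (w : ℂ) : ‖g w‖ ^ 2 ≤ C * Real.exp (-‖a‖ ^ 2) := by
      rw [Real.exp_neg, ← div_eq_mul_inv, le_div_iff₀ (Real.exp_pos _), ← hweight]
      exact hC w
    have hg : Differentiable ℂ g := hψ.mul (by fun_prop)
    simpa [g] using hg.apply_eq_apply_zero_of_norm_sq_le hg_bdd z
  have hψ_eq (w : ℂ) : ψ w = ψ 0 * exp (-starRingEnd ℂ a * lam * w) := by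
    rw [← hg_const w, mul_assoc, ← exp_add]
    simp
  have hψ00 : ψ 0 ≠ 0 := fun h => hψ0 (funext fun w => by simp [hψ_eq w, h])
  refine ⟨hψ_eq, ‖ψ 0‖ ^ 2 * Real.exp (‖a‖ ^ 2), by positivity, fun z => ?_⟩
  rw [hweight, hg_const]

/-- If `ψ ∈ F²` is nonzero, `φ(w) = a + λw` with `|λ| = 1`, and
`sup_z |ψ(z)|² e^{|φ(z)|² - |z|²} < ∞`, then `ψ(w) = ψ(0) e^{-conj(a)λw}` and
`z ↦ |ψ(z)|² e^{|φ(z)|² - |z|²}` is a positive constant. -/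
theorem multiplier_form_of_unimodular (ψ φ : ℂ → ℂ) (a lam : ℂ)
    (hψ : Differentiable ℂ ψ) (hψ2 : MemLp ψ 2 gaussianMeasure) (hψ0 : ψ ≠ 0)
    (hφ : ∀ w : ℂ, φ w = a + lam * w) (hlam : ‖lam‖ = 1)
    (hM : ∃ C : ℝ, ∀ z : ℂ,
      ‖ψ z‖ ^ 2 * Real.exp (‖φ z‖ ^ 2 - ‖z‖ ^ 2) ≤ C) :
    (∀ w : ℂ, ψ w = ψ 0 * Complex.exp (-(starRingEnd ℂ) a * lam * w)) ∧
      ∃ c : ℝ, 0 < c ∧ ∀ z : ℂ,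
        ‖ψ z‖ ^ 2 * Real.exp (‖φ z‖ ^ 2 - ‖z‖ ^ 2) = c :=
  multiplier_form_of_unimodular_general ψ φ a lam hψ hψ0 hφ hlam hM
end
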